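/- For every natural number j, the sum ∑_{p=0}^{j} p!·(j−p)! is at most 3·j!. -/

import Mathlib

lemma aux_half : ∀ p j : ℕ, 1 ≤ p → 2 * p ≤ j →
    p.factorial * (j - p).factorial ≤ (j - 1).factorial := by
  intro p
  induction p with
  | zero => intro j h1 _; omega
  | succ n ih =>
    intro j h1 h2
    rcases Nat.eq_zero_or_pos n with h | h
    · subst h
      simp [Nat.factorial]
    · have hle : n + 1 ≤ j - n := by omega
      have hpos : 0 < j - n := by omega
      have hsub : j - (n + 1) = (j - n) - 1 := by omega
      calc (n + 1).factorial * (j - (n + 1)).factorial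
          = (n + 1) * (n.factorial * ((j - n) - 1).factorial) := by
            rw [hsub, Nat.factorial_succ]; ring
        _ ≤ (j - n) * (n.factorial * ((j - n) - 1).factorial) :=
            Nat.mul_le_mul_right _ hle
        _ = n.factorial * ((j - n) * ((j - n) - 1).factorial) := by ring
        _ = n.factorial * (j - n).factorial := by
            rw [Nat.mul_factorial_pred hpos.ne']
        _ ≤ (j - 1).factorial := ih j h (by omega)

lemma aux_bound (j p : ℕ) (h1 : 1 ≤ p) (h2 : p ≤ j - 1) (hj : 1 ≤ j) :
    p.factorial * (j - p).factorial ≤ (j - 1).factorial := by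
  rcases le_or_gt (2 * p) j with h | h
  · exact aux_half p j h1 h
  · have h1' : 1 ≤ j - p := by omega
    have h2' : 2 * (j - p) ≤ j := by omega
    have := aux_half (j - p) j h1' h2'
    rwa [Nat.sub_sub_self (by omega), Nat.mul_comm] at this

/-- For every natural number `j`, `∑_{p=0}^{j} p! (j-p)! ≤ 3 j!`. -/
theorem stmt_0 (j : ℕ) :
    ∑ p ∈ Finset.range (j + 1), p.factorial * (j - p).factorial ≤ 3 * j.factorial := by
  rcases Nat.eq_zero_or_pos j with hj | hj
  · subst hj; simp
  · obtain ⟨m, rfl⟩ : ∃ m, j = m + 1 := ⟨j - 1, by omega⟩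
    set j := m + 1 with hjdef
    rw [Finset.sum_range_succ, Finset.sum_range_succ']
    have hmid : ∑ i ∈ Finset.range m,
        (i + 1).factorial * (j - (i + 1)).factorial ≤ m * m.factorial := by
      calc ∑ i ∈ Finset.range m, (i + 1).factorial * (j - (i + 1)).factorial
          ≤ ∑ _i ∈ Finset.range m, (j - 1).factorial := by
            apply Finset.sum_le_sum
            intro i hi
            simp only [Finset.mem_range] at hi
            exact aux_bound j (i + 1) (by omega) (by omega) (by omega)
        _ = m * m.factorial := by
            simp [hjdef]
    have h0 : (0 : ℕ).factorial * (j - 0).factorial = j.factorial := by simp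
    have hj2 : j.factorial * (j - j).factorial = j.factorial := by simp
    have hmm : m * m.factorial ≤ j.factorial := by
      calc m * m.factorial ≤ j * m.factorial := Nat.mul_le_mul_right _ (by omega)
        _ = j.factorial := Nat.mul_factorial_pred hj.ne'
    omega
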